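/- arXiv:2505.06050 — 4 statements merged into one kernel-verified Lean document; each statement's English description precedes it below -/
import Mathlib

section
/- Let p be a probability distribution on a finite alphabet X and t a type of length-n sequences. Then the probability under the i.i.d. measure p^n of the set of sequences of type t satisfies (n+1)^{-|X|} 2^{−n D(t‖p)} ≤ p^n(T_n^t) ≤ 2^{−n D(t‖p)}. -/
/-- The empirical distribution (type) of a sequence `xs : Fin n → X`. -/
noncomputable def typeOf {X : Type*} [Fintype X] [DecidableEq X] (n : ℕ) (xs : Fin n → X) :
    X → ℝ :=
  fun a => ((Finset.univ.filter fun i => xs i = a).card : ℝ) / n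

/-- `p` is a probability distribution on the finite set `X`. -/
def IsProb {X : Type*} [Fintype X] (p : X → ℝ) : Prop :=
  (∀ x, 0 ≤ p x) ∧ ∑ x, p x = 1

/-- Base-2 relative entropy (Kullback–Leibler divergence). -/
noncomputable def Dkl {X : Type*} [Fintype X] (t p : X → ℝ) : ℝ :=
  ∑ x, t x * Real.logb 2 (t x / p x)

open Finset Nat
set_option linter.unusedSectionVars false
attribute [local instance] Classical.propDecidable
section
variable {X : Type*} [Fintype X] [DecidableEq X] {n : ℕ}
def cnt (xs : Fin n → X) (a : X) : ℕ := (Finset.univ.filter fun i => xs i = a).card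

lemma fact_aux (a m : ℕ) : (a + m)! ≤ a ! * (a + m) ^ m := by
  induction m with
  | zero => simp
  | succ m ih =>
    have e : a + (m+1) = (a + m) + 1 := by ring
    rw [e, Nat.factorial_succ]
    calc (a + m + 1) * (a + m)! ≤ (a + m + 1) * (a ! * (a + m) ^ m) :=
          Nat.mul_le_mul_left _ ih
      _ ≤ a ! * (a + (m+1)) ^ (m+1) := by
          rw [pow_succ]
          have h1 : (a + m) ^ m ≤ (a + (m+1)) ^ m :=
            Nat.pow_le_pow_left (by omega) m
          calc (a + m + 1) * (a ! * (a + m) ^ m) = a ! * ((a + m) ^ m * (a + m + 1)) := by ring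
            _ ≤ a ! * ((a + (m+1)) ^ m * (a + (m+1))) :=
                Nat.mul_le_mul_left _ (Nat.mul_le_mul h1 (by omega))

lemma fact_pow_le (a b : ℕ) : b ! * b ^ a ≤ a ! * b ^ b := by
  rcases le_total a b with h | h
  · obtain ⟨m, rfl⟩ : ∃ m, b = a + m := ⟨b - a, by omega⟩
    calc (a+m)! * (a+m) ^ a ≤ (a ! * (a+m) ^ m) * (a+m) ^ a :=
          Nat.mul_le_mul_right _ (fact_aux a m)
      _ = a ! * (a+m) ^ (a+m) := by rw [mul_assoc, ← pow_add]; ring_nf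
  · obtain ⟨m, rfl⟩ : ∃ m, a = b + m := ⟨a - b, by omega⟩
    have h1 : b ! * (b+1) ^ m ≤ (b + m)! := Nat.factorial_mul_pow_le_factorial
    calc b ! * b ^ (b + m) = (b ! * b ^ m) * b ^ b := by rw [mul_assoc, ← pow_add]; ring_nf
      _ ≤ ((b + m)!) * b ^ b := by
          refine Nat.mul_le_mul_right _ ?_
          exact le_trans (Nat.mul_le_mul_left _ (Nat.pow_le_pow_left (by omega) m)) h1

lemma cnt_sum (xs : Fin n → X) : ∑ a, cnt xs a = n := by
  have := Finset.card_eq_sum_card_fiberwise (f := xs) (s := Finset.univ) (t := Finset.univ)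
    (fun x _ => Finset.mem_univ _)
  simpa [cnt] using this.symm

lemma prod_comp_eq (q : X → ℝ) (xs : Fin n → X) : ∏ i, q (xs i) = ∏ a, q a ^ cnt xs a := by
  rw [← Finset.prod_fiberwise_of_maps_to (g := xs) (t := Finset.univ)
    (fun x _ => Finset.mem_univ _) (fun i => q (xs i))]
  refine Finset.prod_congr rfl fun a _ => ?_
  rw [Finset.prod_congr rfl (fun i hi => by rw [(Finset.mem_filter.1 hi).2] : ∀ i ∈ _, q (xs i) = q a),
    Finset.prod_const, cnt]

lemma cnt_comp_perm (f : Fin n → X) (σ : Equiv.Perm (Fin n)) (a : X) :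
    cnt (f ∘ ⇑σ) a = cnt f a := by
  rw [cnt, cnt, ← Fintype.card_subtype, ← Fintype.card_subtype]
  exact Fintype.card_congr (σ.subtypeEquiv fun i => by simp)

lemma exists_comp_eq {f g : Fin n → X} (h : ∀ a, cnt g a = cnt f a) :
    ∃ σ : Equiv.Perm (Fin n), f ∘ ⇑σ = g := by
  have hfib : ∀ a, Fintype.card {i // g i = a} = Fintype.card {i // f i = a} := by
    intro a; rw [Fintype.card_subtype, Fintype.card_subtype]; exact h a
  refine ⟨(Equiv.sigmaFiberEquiv g).symm.trans
    ((Equiv.sigmaCongrRight fun a => Fintype.equivOfCardEq (hfib a)).trans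
      (Equiv.sigmaFiberEquiv f)), ?_⟩
  funext i
  simp only [Function.comp_apply, Equiv.trans_apply, Equiv.sigmaFiberEquiv,
    Equiv.sigmaCongrRight, Equiv.coe_fn_mk, Equiv.coe_fn_symm_mk]
  exact ((Fintype.equivOfCardEq (hfib (g i))) ⟨i, rfl⟩).2

lemma class_card (f : Fin n → X) :
    (Finset.univ.filter fun g : Fin n → X => ∀ a, cnt g a = cnt f a).card
      * ∏ a, (cnt f a)! = n ! := by
  have key : (Finset.univ : Finset (Equiv.Perm (Fin n))).card =
      ∑ g ∈ Finset.univ.filter (fun g : Fin n → X => ∀ a, cnt g a = cnt f a),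
        (Finset.univ.filter fun σ : Equiv.Perm (Fin n) => f ∘ ⇑σ = g).card := by
    refine Finset.card_eq_sum_card_fiberwise (f := fun σ : Equiv.Perm (Fin n) => f ∘ ⇑σ) ?_
    intro σ _
    simp only [Finset.mem_coe, Finset.mem_filter, Finset.mem_univ, true_and]
    exact fun a => cnt_comp_perm f σ a
  have stab : (Finset.univ.filter fun σ : Equiv.Perm (Fin n) => f ∘ ⇑σ = f).card
      = ∏ a, (cnt f a)! := by
    rw [← Fintype.card_subtype, DomMulAct.stabilizer_card (α := Fin n) (ι := X) f]
    exact Finset.prod_congr rfl fun a _ => by rw [Fintype.card_subtype]; rfl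
  have fib : ∀ g ∈ Finset.univ.filter (fun g : Fin n → X => ∀ a, cnt g a = cnt f a),
      (Finset.univ.filter fun σ : Equiv.Perm (Fin n) => f ∘ ⇑σ = g).card
        = ∏ a, (cnt f a)! := by
    intro g hg
    simp only [Finset.mem_filter, Finset.mem_univ, true_and] at hg
    obtain ⟨τ, hτ⟩ := exists_comp_eq hg
    rw [← stab]
    refine Finset.card_bij (fun σ _ => σ * τ⁻¹) ?_ ?_ ?_
    · intro σ hσ
      simp only [Finset.mem_filter, Finset.mem_univ, true_and] at hσ ⊢
      funext i
      have := congrFun hσ (τ⁻¹ i)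
      have h2 := congrFun hτ (τ⁻¹ i)
      simp only [Function.comp_apply, Equiv.Perm.mul_apply] at *
      rw [this, ← h2, Equiv.Perm.coe_inv, Equiv.apply_symm_apply]
    · intro σ₁ _ σ₂ _ h; exact mul_right_cancel h
    · intro σ' hσ'
      simp only [Finset.mem_filter, Finset.mem_univ, true_and] at hσ'
      refine ⟨σ' * τ, ?_, by group⟩
      simp only [Finset.mem_filter, Finset.mem_univ, true_and]
      funext i
      have := congrFun hσ' (τ i)
      have h2 := congrFun hτ i
      simp only [Function.comp_apply, Equiv.Perm.mul_apply] at *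
      rw [this, h2]
  rw [Finset.sum_congr rfl fib, Finset.sum_const, smul_eq_mul] at key
  rw [← key, Finset.card_univ, Fintype.card_perm, Fintype.card_fin]

lemma typeOf_apply (xs : Fin n → X) (a : X) : typeOf n xs a = (cnt xs a : ℝ) / n := rfl

end

/-- Probability of a type class under the i.i.d. measure:
`(n+1)^{-|X|} 2^{-n D(t‖p)} ≤ p^n(T_n^t) ≤ 2^{-n D(t‖p)}`. -/
theorem type_class_prob_bounds {X : Type*} [Fintype X] [DecidableEq X] (n : ℕ) (p t : X → ℝ)
    (hp : IsProb p) (ht : ∃ xs : Fin n → X, typeOf n xs = t)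
    (hac : ∀ x, p x = 0 → t x = 0) :
    ((n : ℝ) + 1) ^ (-(Fintype.card X : ℝ)) * 2 ^ (-((n : ℝ) * Dkl t p)) ≤
        (∑ xs : {xs : Fin n → X // typeOf n xs = t}, ∏ i, p (xs.1 i)) ∧
      (∑ xs : {xs : Fin n → X // typeOf n xs = t}, ∏ i, p (xs.1 i)) ≤
        2 ^ (-((n : ℝ) * Dkl t p)) := by
  classical
  obtain ⟨xs₀, hxs₀⟩ := ht
  rcases Nat.eq_zero_or_pos n with hn | hn
  · subst hn
    have ht0 : ∀ a, t a = 0 := by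
      intro a; rw [← hxs₀]; simp [typeOf]
    have hD : Dkl t p = 0 := by simp [Dkl, ht0]
    have hsub : Subsingleton {xs : Fin 0 → X // typeOf 0 xs = t} :=
      ⟨fun a b => by ext i; exact i.elim0⟩
    have h1 : (∑ xs : {xs : Fin 0 → X // typeOf 0 xs = t}, ∏ i, p (xs.1 i)) = 1 := by
      rw [Fintype.sum_subsingleton _ (⟨xs₀, hxs₀⟩ : {xs : Fin 0 → X // typeOf 0 xs = t})]
      simp
    rw [h1, hD]
    norm_num
  · have hnR : (0 : ℝ) < n := by exact_mod_cast hn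
    have htk : ∀ a, t a = (cnt xs₀ a : ℝ) / n := fun a => by
      rw [← hxs₀, typeOf_apply]
    have hkn : ∑ a, cnt xs₀ a = n := cnt_sum xs₀
    have hmem : ∀ xs : Fin n → X, typeOf n xs = t ↔ ∀ a, cnt xs a = cnt xs₀ a := by
      intro xs
      constructor
      · intro h a
        have h2 : (cnt xs a : ℝ) / n = (cnt xs₀ a : ℝ) / n := by
          rw [← htk a, ← h, typeOf_apply]
        rw [div_eq_div_iff (ne_of_gt hnR) (ne_of_gt hnR)] at h2
        have h3 : (cnt xs a : ℝ) = cnt xs₀ a := mul_right_cancel₀ (ne_of_gt hnR) h2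
        exact_mod_cast h3
      · intro h
        funext a
        rw [typeOf_apply, h a, htk a]
    set A : Finset (Fin n → X) := Finset.univ.filter (fun xs => typeOf n xs = t) with hA
    have hAeq : A = Finset.univ.filter (fun xs : Fin n → X => ∀ a, cnt xs a = cnt xs₀ a) :=
      Finset.filter_congr fun xs _ => hmem xs
    have hconst : ∀ q : X → ℝ, ∀ xs ∈ A, ∏ i, q (xs i) = ∏ a, q a ^ cnt xs₀ a := by
      intro q xs hxs
      rw [prod_comp_eq]
      exact Finset.prod_congr rfl fun a _ => by
        rw [(hmem xs).1 (Finset.mem_filter.1 hxs).2 a]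
    have hS : (∑ xs : {xs : Fin n → X // typeOf n xs = t}, ∏ i, p (xs.1 i))
        = (A.card : ℝ) * ∏ a, p a ^ cnt xs₀ a := by
      rw [← Finset.sum_subtype A (fun xs => by simp [hA]) (fun xs => ∏ i, p (xs i)),
        Finset.sum_congr rfl (hconst p), Finset.sum_const, nsmul_eq_mul]
    have ht0 : ∀ a, 0 ≤ t a := fun a => by rw [htk a]; positivity
    have hTt0 : 0 ≤ ∏ a, t a ^ cnt xs₀ a :=
      Finset.prod_nonneg fun a _ => pow_nonneg (ht0 a) _
    -- key identity
    have hkey : (∏ a, p a ^ cnt xs₀ a)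
        = 2 ^ (-((n : ℝ) * Dkl t p)) * ∏ a, t a ^ cnt xs₀ a := by
      have hper : ∀ a, p a ^ cnt xs₀ a
          = (2 : ℝ) ^ (-((cnt xs₀ a : ℝ) * Real.logb 2 (t a / p a))) * t a ^ cnt xs₀ a := by
        intro a
        rcases Nat.eq_zero_or_pos (cnt xs₀ a) with h | h
        · simp [h]
        · have htp : 0 < t a := by
            rw [htk a]
            apply div_pos _ hnR
            exact_mod_cast h
          have hpp : 0 < p a := by
            rcases (hp.1 a).lt_or_eq with h' | h'
            · exact h'
            · exact absurd (hac a h'.symm) (ne_of_gt htp)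
          have hdiv : 0 < t a / p a := div_pos htp hpp
          have h2 : (2 : ℝ) ^ (-((cnt xs₀ a : ℝ) * Real.logb 2 (t a / p a)))
              = (t a / p a) ^ (-(cnt xs₀ a : ℝ)) := by
            rw [show -((cnt xs₀ a : ℝ) * Real.logb 2 (t a / p a))
                = Real.logb 2 (t a / p a) * (-(cnt xs₀ a : ℝ)) by ring,
              Real.rpow_mul (by norm_num : (0:ℝ) ≤ 2),
              Real.rpow_logb (by norm_num) (by norm_num) hdiv]
          rw [h2, Real.rpow_neg hdiv.le, Real.rpow_natCast, div_pow]
          have hpne : p a ≠ 0 := ne_of_gt hpp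
          have htne : t a ≠ 0 := ne_of_gt htp
          field_simp
      have hexp : (n : ℝ) * Dkl t p = ∑ a, (cnt xs₀ a : ℝ) * Real.logb 2 (t a / p a) := by
        rw [Dkl, Finset.mul_sum]
        refine Finset.sum_congr rfl fun a _ => ?_
        rcases Nat.eq_zero_or_pos (cnt xs₀ a) with h | h
        · have ht' : t a = 0 := by rw [htk a, h]; simp
          simp [h, ht']
        · rw [htk a]
          field_simp
      rw [Finset.prod_congr rfl fun a _ => hper a, Finset.prod_mul_distrib,
        ← Real.rpow_sum_of_pos (by norm_num : (0:ℝ) < 2), hexp, ← Finset.sum_neg_distrib]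
    -- upper bound for A.card * Tt
    have hTsum : ∑ a, t a = 1 := by
      rw [Finset.sum_congr rfl fun a _ => htk a, ← Finset.sum_div]
      rw [show ∑ a, (cnt xs₀ a : ℝ) = (n : ℝ) by exact_mod_cast congrArg Nat.cast hkn]
      exact div_self (ne_of_gt hnR)
    have htotal : (∑ xs : Fin n → X, ∏ i, t (xs i)) = 1 := by
      rw [← Fintype.sum_pow, hTsum, one_pow]
    have hconstA : (∑ xs ∈ A, ∏ i, t (xs i)) = (A.card : ℝ) * ∏ a, t a ^ cnt xs₀ a := by
      rw [Finset.sum_congr rfl (hconst t), Finset.sum_const, nsmul_eq_mul]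
    have hupper : (A.card : ℝ) * (∏ a, t a ^ cnt xs₀ a) ≤ 1 := by
      rw [← htotal, ← hconstA]
      exact Finset.sum_le_sum_of_subset_of_nonneg (Finset.subset_univ A)
        (fun xs _ _ => Finset.prod_nonneg fun i _ => ht0 _)
    -- lower bound
    have cnt_lt : ∀ (xs : Fin n → X) (a : X), cnt xs a < n + 1 := by
      intro xs a
      have h := Finset.card_filter_le (Finset.univ : Finset (Fin n)) (fun i => xs i = a)
      rw [Finset.card_univ, Fintype.card_fin] at h
      exact Nat.lt_succ_of_le h
    have hconv : ∀ c : X → ℕ, (∑ a, c a = n) →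
        (∏ a, t a ^ c a) = (∏ a, (cnt xs₀ a : ℝ) ^ c a) / (n : ℝ) ^ n := by
      intro c hc
      rw [Finset.prod_congr rfl fun a _ => by rw [htk a, div_pow],
        Finset.prod_div_distrib, Finset.prod_pow_eq_pow_sum, hc]
    have hbound : ∀ c : X → Fin (n+1),
        (∑ xs ∈ Finset.univ.filter
            (fun xs : Fin n → X => (fun a => (⟨cnt xs a, cnt_lt xs a⟩ : Fin (n+1))) = c),
          ∏ i, t (xs i)) ≤ (A.card : ℝ) * ∏ a, t a ^ cnt xs₀ a := by
      intro c
      rcases Finset.eq_empty_or_nonempty (Finset.univ.filter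
          (fun xs : Fin n → X => (fun a => (⟨cnt xs a, cnt_lt xs a⟩ : Fin (n+1))) = c))
        with he | ⟨ys₀, hys₀⟩
      · rw [he, Finset.sum_empty]
        exact mul_nonneg (Nat.cast_nonneg _) hTt0
      · have h0 := (Finset.mem_filter.1 hys₀).2
        have hys : ∀ xs : Fin n → X,
            ((fun a => (⟨cnt xs a, cnt_lt xs a⟩ : Fin (n+1))) = c)
              ↔ ∀ a, cnt xs a = cnt ys₀ a := by
          intro xs
          rw [← h0]
          simp [funext_iff, Fin.ext_iff]
        rw [show (Finset.univ.filter
            (fun xs : Fin n → X => (fun a => (⟨cnt xs a, cnt_lt xs a⟩ : Fin (n+1))) = c))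
            = Finset.univ.filter (fun xs : Fin n → X => ∀ a, cnt xs a = cnt ys₀ a) from
          Finset.filter_congr fun xs _ => hys xs]
        set B : Finset (Fin n → X) :=
          Finset.univ.filter (fun xs : Fin n → X => ∀ a, cnt xs a = cnt ys₀ a) with hB
        have hBconst : ∀ xs ∈ B, (∏ i, t (xs i)) = ∏ a, t a ^ cnt ys₀ a := by
          intro xs hxs
          rw [prod_comp_eq]
          exact Finset.prod_congr rfl fun a _ => by
            rw [(Finset.mem_filter.1 hxs).2 a]
        rw [Finset.sum_congr rfl hBconst, Finset.sum_const, nsmul_eq_mul]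
        have hnat : B.card * ∏ a, (cnt xs₀ a) ^ (cnt ys₀ a)
            ≤ A.card * ∏ a, (cnt xs₀ a) ^ (cnt xs₀ a) := by
          have hpos : 0 < (∏ a, (cnt ys₀ a)!) * ∏ a, (cnt xs₀ a)! :=
            Nat.mul_pos (Finset.prod_pos fun a _ => Nat.factorial_pos _)
              (Finset.prod_pos fun a _ => Nat.factorial_pos _)
          refine Nat.le_of_mul_le_mul_right ?_ hpos
          have hAcard : A.card * ∏ a, (cnt xs₀ a)! = n ! := by
            rw [hAeq]; exact class_card xs₀
          have hBcard : B.card * ∏ a, (cnt ys₀ a)! = n ! := class_card ys₀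
          calc B.card * (∏ a, (cnt xs₀ a) ^ (cnt ys₀ a))
                * ((∏ a, (cnt ys₀ a)!) * ∏ a, (cnt xs₀ a)!)
              = (B.card * ∏ a, (cnt ys₀ a)!)
                * ((∏ a, (cnt xs₀ a)!) * ∏ a, (cnt xs₀ a) ^ (cnt ys₀ a)) := by ring
            _ = n ! * ∏ a, ((cnt xs₀ a)! * (cnt xs₀ a) ^ (cnt ys₀ a)) := by
                rw [hBcard, Finset.prod_mul_distrib]
            _ ≤ n ! * ∏ a, ((cnt ys₀ a)! * (cnt xs₀ a) ^ (cnt xs₀ a)) :=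
                Nat.mul_le_mul_left _ (Finset.prod_le_prod' fun a _ => fact_pow_le _ _)
            _ = (A.card * ∏ a, (cnt xs₀ a)!)
                * ((∏ a, (cnt ys₀ a)!) * ∏ a, (cnt xs₀ a) ^ (cnt xs₀ a)) := by
                rw [hAcard, Finset.prod_mul_distrib]; try ring
            _ = A.card * (∏ a, (cnt xs₀ a) ^ (cnt xs₀ a))
                * ((∏ a, (cnt ys₀ a)!) * ∏ a, (cnt xs₀ a)!) := by ring
        calc (B.card : ℝ) * ∏ a, t a ^ cnt ys₀ a
            = ((B.card * ∏ a, (cnt xs₀ a) ^ (cnt ys₀ a) : ℕ) : ℝ) / (n : ℝ) ^ n := by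
              rw [hconv _ (cnt_sum ys₀)]; push_cast; ring
          _ ≤ ((A.card * ∏ a, (cnt xs₀ a) ^ (cnt xs₀ a) : ℕ) : ℝ) / (n : ℝ) ^ n := by
              gcongr
              try exact_mod_cast hnat
          _ = (A.card : ℝ) * ∏ a, t a ^ cnt xs₀ a := by
              rw [hconv _ hkn]; push_cast; ring
    have hpart : (1 : ℝ) = ∑ c : X → Fin (n+1), ∑ xs ∈ Finset.univ.filter
        (fun xs : Fin n → X => (fun a => (⟨cnt xs a, cnt_lt xs a⟩ : Fin (n+1))) = c),
        ∏ i, t (xs i) := by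
      rw [← htotal]
      exact (Finset.sum_fiberwise_of_maps_to (fun xs _ => Finset.mem_univ _) _).symm
    have hlow1 : (1 : ℝ) ≤ ((n : ℝ) + 1) ^ (Fintype.card X)
        * ((A.card : ℝ) * ∏ a, t a ^ cnt xs₀ a) := by
      calc (1:ℝ) = _ := hpart
        _ ≤ ∑ _c : X → Fin (n+1), (A.card : ℝ) * ∏ a, t a ^ cnt xs₀ a :=
            Finset.sum_le_sum fun c _ => hbound c
        _ = (Fintype.card (X → Fin (n+1)) : ℝ)
            * ((A.card : ℝ) * ∏ a, t a ^ cnt xs₀ a) := by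
            rw [Finset.sum_const, nsmul_eq_mul, Finset.card_univ]
        _ = _ := by
            rw [Fintype.card_fun, Fintype.card_fin]
            push_cast
            ring
    have hApos : (0 : ℝ) < ((n : ℝ) + 1) ^ (Fintype.card X) := by positivity
    have hlow : ((n : ℝ) + 1) ^ (-(Fintype.card X : ℝ))
        ≤ (A.card : ℝ) * ∏ a, t a ^ cnt xs₀ a := by
      rw [Real.rpow_neg (by positivity), Real.rpow_natCast, inv_eq_one_div,
        div_le_iff₀ hApos]
      nlinarith [hlow1]
    have h2pos : (0 : ℝ) < (2 : ℝ) ^ (-((n : ℝ) * Dkl t p)) :=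
      Real.rpow_pos_of_pos (by norm_num) _
    rw [hS, hkey]
    constructor
    · calc ((n : ℝ) + 1) ^ (-(Fintype.card X : ℝ)) * 2 ^ (-((n : ℝ) * Dkl t p))
          ≤ ((A.card : ℝ) * ∏ a, t a ^ cnt xs₀ a) * 2 ^ (-((n : ℝ) * Dkl t p)) := by
            gcongr
        _ = (A.card : ℝ) * (2 ^ (-((n : ℝ) * Dkl t p)) * ∏ a, t a ^ cnt xs₀ a) := by ring
    · calc (A.card : ℝ) * (2 ^ (-((n : ℝ) * Dkl t p)) * ∏ a, t a ^ cnt xs₀ a)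
          = ((A.card : ℝ) * ∏ a, t a ^ cnt xs₀ a) * 2 ^ (-((n : ℝ) * Dkl t p)) := by ring
        _ ≤ 1 * 2 ^ (-((n : ℝ) * Dkl t p)) := by gcongr
        _ = 2 ^ (-((n : ℝ) * Dkl t p)) := one_mul _
end

section
/- (Variational expression of classical Rényi divergence, α ∈ (0,1)): Let ρ, σ be nonnegative functions on a finite set X with ρ a probability distribution and supp(ρ) not disjoint from supp(σ). Then for α ∈ (0,1), D_α(ρ‖σ) = min_{τ} [ D(τ‖σ) − (α/(α−1)) D(τ‖ρ) ], where the minimum is over probability distributions τ with supp(τ) ⊆ supp(ρ) ∩ supp(σ), D_α(ρ‖σ) = (1/(α−1)) log₂ ∑_x ρ(x)^α σ(x)^{1−α}, and D is base-2 relative entropy. -/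
lemma gibbs {X : Type*} [Fintype X] (τ q : X → ℝ) (hτ : IsProb τ)
    (hq : ∀ x, 0 ≤ q x) (habs : ∀ x, τ x ≠ 0 → q x ≠ 0)
    (hQ : 0 < ∑ x, q x) :
    - Real.log (∑ x, q x) ≤ ∑ x, τ x * Real.log (τ x / q x) := by
  set Q := ∑ x, q x with hQdef
  have key : ∀ x, τ x * Real.log (q x / (Q * τ x)) ≤ q x / Q - τ x := by
    intro x
    rcases eq_or_lt_of_le (hτ.1 x) with h0 | hpos
    · simp [← h0]
      exact div_nonneg (hq _) hQ.le
    · have hqx : 0 < q x := lt_of_le_of_ne (hq x) (Ne.symm (habs x (ne_of_gt hpos)))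
      have harg : 0 < q x / (Q * τ x) := by positivity
      have hle := Real.log_le_sub_one_of_pos harg
      calc τ x * Real.log (q x / (Q * τ x)) ≤ τ x * (q x / (Q * τ x) - 1) :=
            mul_le_mul_of_nonneg_left hle (le_of_lt hpos)
        _ = q x / Q - τ x := by field_simp
  have hsum : ∑ x, τ x * Real.log (q x / (Q * τ x)) ≤ 0 := by
    calc ∑ x, τ x * Real.log (q x / (Q * τ x)) ≤ ∑ x, (q x / Q - τ x) :=
        Finset.sum_le_sum (fun x _ => key x)
      _ = 0 := by
        rw [Finset.sum_sub_distrib, ← Finset.sum_div, hτ.2]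
        field_simp
        rw [hQdef]; ring
  have hrw : ∀ x, τ x * Real.log (q x / (Q * τ x))
      = - (τ x * Real.log (τ x / q x)) - τ x * Real.log Q := by
    intro x
    rcases eq_or_lt_of_le (hτ.1 x) with h0 | hpos
    · simp [← h0]
    · have hqx : 0 < q x := lt_of_le_of_ne (hq x) (Ne.symm (habs x (ne_of_gt hpos)))
      rw [Real.log_div (ne_of_gt hqx) (by positivity),
        Real.log_mul (ne_of_gt hQ) (ne_of_gt hpos),
        Real.log_div (ne_of_gt hpos) (ne_of_gt hqx)]
      ring
  rw [Finset.sum_congr rfl (fun x _ => hrw x)] at hsum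
  rw [Finset.sum_sub_distrib, Finset.sum_neg_distrib, ← Finset.sum_mul, hτ.2] at hsum
  linarith

/-- Variational expression of the classical Rényi divergence for `α ∈ (0,1)`:
`D_α(ρ‖σ) = min_τ [ D(τ‖σ) - (α/(α-1)) D(τ‖ρ) ]`, the minimum over probability
distributions `τ` with `supp τ ⊆ supp ρ ∩ supp σ`. -/
theorem renyi_divergence_variational {X : Type*} [Fintype X] (ρ σ : X → ℝ)
    (hρ : IsProb ρ) (hσ0 : ∀ x, 0 ≤ σ x) (hover : ∃ x, ρ x ≠ 0 ∧ σ x ≠ 0)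
    (α : ℝ) (hα : α ∈ Set.Ioo (0:ℝ) 1) :
    IsLeast {v | ∃ τ : X → ℝ, IsProb τ ∧ (∀ x, (ρ x = 0 ∨ σ x = 0) → τ x = 0) ∧
        v = Dkl τ σ - (α / (α - 1)) * Dkl τ ρ}
      ((1 / (α - 1)) * Real.logb 2 (∑ x, ρ x ^ α * σ x ^ (1 - α))) := by
  obtain ⟨hα0, hα1⟩ := hα
  have hα1' : (1:ℝ) - α > 0 := by linarith
  have hαne : α - 1 ≠ 0 := by linarith
  set q : X → ℝ := fun x => ρ x ^ α * σ x ^ (1 - α) with hqdef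
  have hq0 : ∀ x, 0 ≤ q x := fun x =>
    mul_nonneg (Real.rpow_nonneg (hρ.1 x) _) (Real.rpow_nonneg (hσ0 x) _)
  set Z : ℝ := ∑ x, q x with hZdef
  have hZ : 0 < Z := by
    obtain ⟨x0, hx0ρ, hx0σ⟩ := hover
    have hρ0 : 0 < ρ x0 := lt_of_le_of_ne (hρ.1 x0) (Ne.symm hx0ρ)
    have hσ0' : 0 < σ x0 := lt_of_le_of_ne (hσ0 x0) (Ne.symm hx0σ)
    refine Finset.sum_pos' (fun x _ => hq0 x) ⟨x0, Finset.mem_univ x0, ?_⟩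
    exact mul_pos (Real.rpow_pos_of_pos hρ0 _) (Real.rpow_pos_of_pos hσ0' _)
  -- positivity of support of q relative to τ
  have hqpos : ∀ τ : X → ℝ, IsProb τ → (∀ x, (ρ x = 0 ∨ σ x = 0) → τ x = 0) →
      ∀ x, τ x ≠ 0 → 0 < ρ x ∧ 0 < σ x := by
    intro τ hτ hsupp x hx
    have hρx : ρ x ≠ 0 := fun h => hx (hsupp x (Or.inl h))
    have hσx : σ x ≠ 0 := fun h => hx (hsupp x (Or.inr h))
    exact ⟨lt_of_le_of_ne (hρ.1 x) (Ne.symm hρx), lt_of_le_of_ne (hσ0 x) (Ne.symm hσx)⟩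
  -- key identity
  have keyeq : ∀ τ : X → ℝ, IsProb τ → (∀ x, (ρ x = 0 ∨ σ x = 0) → τ x = 0) →
      Dkl τ σ - (α / (α - 1)) * Dkl τ ρ
        = (1 / (1 - α)) * ∑ x, τ x * Real.logb 2 (τ x / q x) := by
    intro τ hτ hsupp
    unfold Dkl
    rw [Finset.mul_sum, Finset.mul_sum, ← Finset.sum_sub_distrib]
    refine Finset.sum_congr rfl fun x _ => ?_
    rcases eq_or_ne (τ x) 0 with h0 | hne
    · simp [h0]
    · obtain ⟨hρx, hσx⟩ := hqpos τ hτ hsupp x hne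
      have hτx : 0 < τ x := lt_of_le_of_ne (hτ.1 x) (Ne.symm hne)
      have e1 : Real.logb 2 (τ x / σ x) = Real.logb 2 (τ x) - Real.logb 2 (σ x) :=
        Real.logb_div hne (ne_of_gt hσx)
      have e2 : Real.logb 2 (τ x / ρ x) = Real.logb 2 (τ x) - Real.logb 2 (ρ x) :=
        Real.logb_div hne (ne_of_gt hρx)
      have e3 : Real.logb 2 (τ x / q x)
          = Real.logb 2 (τ x) - (α * Real.logb 2 (ρ x) + (1 - α) * Real.logb 2 (σ x)) := by
        have hq1 : (0:ℝ) < ρ x ^ α := Real.rpow_pos_of_pos hρx _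
        have hq2 : (0:ℝ) < σ x ^ (1 - α) := Real.rpow_pos_of_pos hσx _
        rw [hqdef, Real.logb_div hne (by positivity),
          Real.logb_mul (ne_of_gt hq1) (ne_of_gt hq2)]
        unfold Real.logb
        rw [Real.log_rpow hρx, Real.log_rpow hσx]
        ring
      rw [e1, e2, e3]
      field_simp
      ring
  constructor
  · -- membership : the minimizer τ* = q / Z
    refine ⟨fun x => q x / Z, ⟨fun x => div_nonneg (hq0 x) hZ.le, ?_⟩, ?_, ?_⟩
    · rw [← Finset.sum_div, ← hZdef, div_self (ne_of_gt hZ)]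
    · intro x hx
      rcases hx with h | h
      · simp [hqdef, h, Real.zero_rpow (ne_of_gt hα0)]
      · simp [hqdef, h, Real.zero_rpow (by linarith : (1:ℝ) - α ≠ 0)]
    · rw [keyeq _ ⟨fun x => div_nonneg (hq0 x) hZ.le, by
          rw [← Finset.sum_div, ← hZdef, div_self (ne_of_gt hZ)]⟩
          (by
            intro x hx
            rcases hx with h | h
            · simp [hqdef, h, Real.zero_rpow (ne_of_gt hα0)]
            · simp [hqdef, h, Real.zero_rpow (by linarith : (1:ℝ) - α ≠ 0)])]
      have hterm : ∀ x, (q x / Z) * Real.logb 2 ((q x / Z) / q x)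
          = (q x / Z) * (- Real.logb 2 Z) := by
        intro x
        rcases eq_or_ne (q x) 0 with h | h
        · simp [h]
        · have : (q x / Z) / q x = Z⁻¹ := by field_simp
          rw [this, Real.logb_inv]
      rw [Finset.sum_congr rfl fun x _ => hterm x, ← Finset.sum_mul, ← Finset.sum_div,
        ← hZdef, div_self (ne_of_gt hZ), one_mul]
      field_simp
      ring
  · -- lower bound
    rintro v ⟨τ, hτ, hsupp, rfl⟩
    rw [keyeq τ hτ hsupp]
    have habs : ∀ x, τ x ≠ 0 → q x ≠ 0 := by
      intro x hx
      obtain ⟨h1, h2⟩ := hqpos τ hτ hsupp x hx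
      exact ne_of_gt (mul_pos (Real.rpow_pos_of_pos h1 _) (Real.rpow_pos_of_pos h2 _))
    have hg := gibbs τ q hτ hq0 habs hZ
    have hlog2 : (0:ℝ) < Real.log 2 := Real.log_pos (by norm_num)
    have hS : - Real.logb 2 Z ≤ ∑ x, τ x * Real.logb 2 (τ x / q x) := by
      have : ∑ x, τ x * Real.logb 2 (τ x / q x)
          = (∑ x, τ x * Real.log (τ x / q x)) / Real.log 2 := by
        rw [Finset.sum_div]
        exact Finset.sum_congr rfl fun x _ => by unfold Real.logb; ring
      rw [this]
      unfold Real.logb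
      rw [← neg_div]
      gcongr
    have h1α : (0:ℝ) < 1 / (1 - α) := by positivity
    calc (1 / (α - 1)) * Real.logb 2 Z = (1 / (1 - α)) * (- Real.logb 2 Z) := by
          field_simp; ring
      _ ≤ (1 / (1 - α)) * ∑ x, τ x * Real.logb 2 (τ x / q x) :=
          mul_le_mul_of_nonneg_left hS h1α.le
end

section
/- Let H = ⊕_{i∈I} H_i be a finite orthogonal decomposition of a finite-dimensional Hilbert space with projections Π_i onto H_i. Let ρ, σ be positive semidefinite operators on H and assume σ = ∑_i σ_i with supp(σ_i) ⊆ H_i. Then F(∑_i Π_i ρ Π_i, σ) ≤ √|I| · F(ρ, σ), where F(A,B) = ‖√A √B‖₁ is the fidelity. -/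
open scoped ComplexOrder
open scoped Classical
open Matrix

/-- The positive semidefinite square root of a positive semidefinite matrix
(the definition `Matrix.PosSemidef.sqrt` of the older Mathlib, since removed). -/
noncomputable def Matrix.PosSemidef.sqrt {n : Type*} [Fintype n] [DecidableEq n] {𝕜 : Type*}
    [RCLike 𝕜] {A : Matrix n n 𝕜} (hA : A.PosSemidef) : Matrix n n 𝕜 :=
  hA.1.eigenvectorUnitary.1 * diagonal ((↑) ∘ (√·) ∘ hA.1.eigenvalues) *
    (star hA.1.eigenvectorUnitary : Matrix n n 𝕜)

/-- The fidelity `F(ρ,σ) = Tr √(√ρ σ √ρ)` of two positive semidefinite matrices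
(junk value `0` if either matrix fails to be positive semidefinite). -/
noncomputable def mfid {d : ℕ} (ρ σ : Matrix (Fin d) (Fin d) ℂ) : ℝ :=
  if h : ρ.PosSemidef ∧ σ.PosSemidef then
    (((h.2.mul_mul_conjTranspose_same h.1.sqrt).sqrt).trace).re
  else 0

section SqrtLemmas

set_option linter.unusedSectionVars false

variable {n : Type*} [Fintype n] [DecidableEq n]

lemma Matrix.PosSemidef.sqrt_eq_cfc {A : Matrix n n ℂ} (hA : A.PosSemidef) :
    hA.sqrt = cfc Real.sqrt A := by
  rw [hA.1.cfc_eq Real.sqrt, Matrix.IsHermitian.cfc, Unitary.conjStarAlgAut_apply]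
  rfl

lemma Matrix.PosSemidef.spectrum_nonneg' {A : Matrix n n ℂ} (hA : A.PosSemidef) :
    ∀ x ∈ spectrum ℝ A, 0 ≤ x := by
  intro x hx
  obtain ⟨i, rfl⟩ := hA.1.spectrum_real_eq_range_eigenvalues ▸ hx
  exact hA.eigenvalues_nonneg i

lemma Matrix.PosSemidef.posSemidef_sqrt {A : Matrix n n ℂ} (hA : A.PosSemidef) :
    hA.sqrt.PosSemidef := by
  unfold Matrix.PosSemidef.sqrt
  have hd : (diagonal ((↑) ∘ (√·) ∘ hA.1.eigenvalues) : Matrix n n ℂ).PosSemidef := by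
    refine Matrix.PosSemidef.diagonal fun i => ?_
    simp only [Function.comp_apply, Pi.zero_apply]
    exact Complex.zero_le_real.mpr (Real.sqrt_nonneg _)
  have := hd.mul_mul_conjTranspose_same (hA.1.eigenvectorUnitary : Matrix n n ℂ)
  simpa [star_eq_conjTranspose] using this

lemma Matrix.PosSemidef.sqrt_mul_self {A : Matrix n n ℂ} (hA : A.PosSemidef) :
    hA.sqrt * hA.sqrt = A := by
  have hsa : IsSelfAdjoint A := hA.1
  rw [hA.sqrt_eq_cfc, ← cfc_mul Real.sqrt Real.sqrt A]
  conv_rhs => rw [← cfc_id' ℝ A]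
  refine cfc_congr fun x hx => ?_
  exact Real.mul_self_sqrt (hA.spectrum_nonneg' x hx)

lemma Matrix.PosSemidef.eq_sqrt_of_sq_eq {A : Matrix n n ℂ} (hA : A.PosSemidef)
    {B : Matrix n n ℂ} (hB : B.PosSemidef) (hAB : A ^ 2 = B) : A = hB.sqrt := by
  have hsa : IsSelfAdjoint A := hA.1
  rw [hB.sqrt_eq_cfc, ← hAB, ← cfc_pow_id (R := ℝ) A 2, ← cfc_comp Real.sqrt (fun x : ℝ => x ^ 2) A]
  conv_lhs => rw [← cfc_id' ℝ A]
  refine cfc_congr fun x hx => ?_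
  exact (Real.sqrt_sq (hA.spectrum_nonneg' x hx)).symm

end SqrtLemmas

section AuxLemmas

set_option linter.unusedSectionVars false

variable {n : Type*} [Fintype n] [DecidableEq n]

lemma aux_diag_nonneg {A : Matrix n n ℂ} (hA : A.PosSemidef) (i : n) : 0 ≤ A i i := by
  exact hA.diag_nonneg

lemma aux_trace_re_nonneg {A : Matrix n n ℂ} (hA : A.PosSemidef) : 0 ≤ A.trace.re := by
  rw [Matrix.trace, Complex.re_sum]
  refine Finset.sum_nonneg fun i _ => ?_
  exact ((Complex.le_def).mp (aux_diag_nonneg hA i)).1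

lemma aux_sqrt_congr {A B : Matrix n n ℂ} (h : A = B) (hA : A.PosSemidef) (hB : B.PosSemidef) :
    hA.sqrt = hB.sqrt := by subst h; rfl

lemma aux_sqrt_mul_eq_zero {A : Matrix n n ℂ} (hA : A.PosSemidef) {B : Matrix n n ℂ}
    (h : A * B = 0) : hA.sqrt * B = 0 := by
  have key : (hA.sqrt * B)ᴴ * (hA.sqrt * B) = 0 := by
    calc (hA.sqrt * B)ᴴ * (hA.sqrt * B) = Bᴴ * (hA.sqrtᴴ * hA.sqrt) * B := by
          rw [conjTranspose_mul]; noncomm_ring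
      _ = Bᴴ * (A * B) := by rw [hA.posSemidef_sqrt.1, hA.sqrt_mul_self, Matrix.mul_assoc]
      _ = 0 := by rw [h, Matrix.mul_zero]
  exact conjTranspose_mul_self_eq_zero.mp key

lemma aux_mul_sqrt_eq_zero {A : Matrix n n ℂ} (hA : A.PosSemidef) {B : Matrix n n ℂ}
    (h : B * A = 0) : B * hA.sqrt = 0 := by
  have h' : A * Bᴴ = 0 := by
    have := congrArg conjTranspose h
    simpa [conjTranspose_mul, hA.1.eq] using this
  have := aux_sqrt_mul_eq_zero hA h'
  have := congrArg conjTranspose this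
  simpa [conjTranspose_mul, hA.posSemidef_sqrt.1.eq] using this

lemma aux_sqrt_orth {A B : Matrix n n ℂ} (hA : A.PosSemidef) (hB : B.PosSemidef)
    (h : A * B = 0) : hA.sqrt * hB.sqrt = 0 :=
  aux_mul_sqrt_eq_zero hB (aux_sqrt_mul_eq_zero hA h)

lemma aux_psd_sum {I : Type*} [Fintype I] (N : I → Matrix n n ℂ) (h : ∀ i, (N i).PosSemidef) :
    (∑ i, N i).PosSemidef := by
  classical
  refine Finset.sum_induction N _ (fun a b ha hb => ha.add hb) Matrix.PosSemidef.zero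
    (fun i _ => h i)

lemma aux_trace_sqrt {A : Matrix n n ℂ} (hA : A.PosSemidef) :
    hA.sqrt.trace = ↑(∑ i, Real.sqrt (hA.1.eigenvalues i)) := by
  unfold Matrix.PosSemidef.sqrt
  rw [trace_mul_cycle, Matrix.mem_unitaryGroup_iff'.mp hA.1.eigenvectorUnitary.2, Matrix.one_mul,
    trace_diagonal]
  push_cast
  rfl


lemma aux_sqrt_sum {I : Type*} [Fintype I] (N : I → Matrix n n ℂ) (h : ∀ i, (N i).PosSemidef)
    (ho : ∀ i j, i ≠ j → N i * N j = 0) (hS : (∑ i, N i).PosSemidef) :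
    hS.sqrt = ∑ i, (h i).sqrt := by
  refine ((aux_psd_sum _ fun i => (h i).posSemidef_sqrt).eq_sqrt_of_sq_eq hS ?_).symm
  rw [pow_two, Finset.sum_mul_sum]
  refine Finset.sum_congr rfl fun i _ => ?_
  rw [Finset.sum_eq_single_of_mem i (Finset.mem_univ i)]
  · exact (h i).sqrt_mul_self
  · intro j _ hji
    exact aux_sqrt_orth (h i) (h j) (ho i j (Ne.symm hji))

lemma aux_sum_pair (F : n × n → ℝ) : ∑ p : n × n, F p = ∑ j, ∑ k, F (j, k) := by
  rw [← Finset.univ_product_univ, Finset.sum_product]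

lemma aux_trace_CS (A B : Matrix n n ℂ) :
    ((Aᴴ * B).trace).re ≤ Real.sqrt ((Aᴴ * A).trace.re) * Real.sqrt ((Bᴴ * B).trace.re) := by
  have habs : ∀ C : Matrix n n ℂ, (Cᴴ * C).trace.re = ∑ p : n × n, ‖C p.2 p.1‖ ^ 2 := by
    intro C
    rw [Matrix.trace, Complex.re_sum, aux_sum_pair (fun p => ‖C p.2 p.1‖ ^ 2)]
    refine Finset.sum_congr rfl fun j _ => ?_
    rw [Matrix.diag_apply, Matrix.mul_apply, Complex.re_sum]
    refine Finset.sum_congr rfl fun k _ => ?_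
    rw [conjTranspose_apply, RCLike.star_def, mul_comm, Complex.mul_conj, Complex.ofReal_re,
      Complex.sq_norm]
  have h1 : (Aᴴ * B).trace.re ≤ ∑ p : n × n, ‖A p.2 p.1‖ * ‖B p.2 p.1‖ := by
    rw [Matrix.trace, Complex.re_sum, aux_sum_pair (fun p => ‖A p.2 p.1‖ * ‖B p.2 p.1‖)]
    refine Finset.sum_le_sum fun j _ => ?_
    rw [Matrix.diag_apply, Matrix.mul_apply, Complex.re_sum]
    refine le_trans (Finset.sum_le_sum fun k _ => Complex.re_le_norm _) ?_
    refine le_of_eq (Finset.sum_congr rfl fun k _ => ?_)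
    rw [conjTranspose_apply, norm_mul, RCLike.star_def, Complex.norm_conj]
  refine h1.trans ?_
  rw [habs, habs]
  have hcs := Finset.sum_mul_sq_le_sq_mul_sq Finset.univ
    (fun p : n × n => ‖A p.2 p.1‖) (fun p : n × n => ‖B p.2 p.1‖)
  have hnn : 0 ≤ ∑ p : n × n, ‖A p.2 p.1‖ * ‖B p.2 p.1‖ :=
    Finset.sum_nonneg fun p _ => mul_nonneg (norm_nonneg _) (norm_nonneg _)
  calc ∑ p : n × n, ‖A p.2 p.1‖ * ‖B p.2 p.1‖
      = Real.sqrt ((∑ p : n × n, ‖A p.2 p.1‖ * ‖B p.2 p.1‖) ^ 2) := by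
        rw [Real.sqrt_sq hnn]
    _ ≤ Real.sqrt ((∑ p : n × n, ‖A p.2 p.1‖ ^ 2) * ∑ p : n × n, ‖B p.2 p.1‖ ^ 2) :=
        Real.sqrt_le_sqrt hcs
    _ = _ := Real.sqrt_mul (Finset.sum_nonneg fun p _ => sq_nonneg _) _


lemma aux_trace_mul_proj_le {T P : Matrix n n ℂ} (hT : T.PosSemidef)
    (hP : Pᴴ = P) (hP2 : P * P = P) : (T * P).trace.re ≤ T.trace.re := by
  have hpsd : ((1 - P) * T * (1 - P)ᴴ).PosSemidef := hT.mul_mul_conjTranspose_same (1 - P)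
  have h0 : 0 ≤ ((1 - P) * T * (1 - P)ᴴ).trace.re := aux_trace_re_nonneg hpsd
  have hexp : ((1 - P) * T * (1 - P)ᴴ).trace = T.trace - (T * P).trace := by
    have h1 : (1 - P)ᴴ = 1 - P := by rw [conjTranspose_sub, conjTranspose_one, hP]
    rw [h1]
    have hexp2 : (1 - P) * T * (1 - P) = T - P * T - T * P + P * T * P := by noncomm_ring
    rw [hexp2]
    have htp : (P * T * P).trace = (T * P).trace := by
      rw [Matrix.trace_mul_cycle, hP2, Matrix.trace_mul_comm]
    have hpt : (P * T).trace = (T * P).trace := Matrix.trace_mul_comm _ _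
    rw [trace_add, trace_sub, trace_sub, htp, hpt]
    ring
  rw [hexp, Complex.sub_re] at h0
  linarith

lemma aux_support_cols (G : Matrix n n ℂ) (lam : n → ℝ)
    (hGG : Gᴴ * G = diagonal (fun i => (lam i : ℂ))) :
    G * diagonal (fun i => if lam i = 0 then (0 : ℂ) else 1) = G := by
  set f : n → ℂ := fun i => if lam i = 0 then (1 : ℂ) else 0 with hf
  have hzero : G * diagonal f = 0 := by
    have h0 : (G * diagonal f)ᴴ * (G * diagonal f) = 0 := by
      rw [conjTranspose_mul, diagonal_conjTranspose, Matrix.mul_assoc,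
        ← Matrix.mul_assoc Gᴴ G, hGG, diagonal_mul_diagonal, diagonal_mul_diagonal]
      ext i j
      by_cases h : lam i = 0 <;> simp [Matrix.diagonal_apply, hf, h]
    exact conjTranspose_mul_self_eq_zero.mp h0
  have hsum : G * diagonal (fun i => if lam i = 0 then (0 : ℂ) else 1) + G * diagonal f = G := by
    rw [← Matrix.mul_add]
    have hone : (diagonal (fun i => if lam i = 0 then (0 : ℂ) else 1) + diagonal f) = 1 := by
      rw [diagonal_add]
      ext i j
      by_cases h : lam i = 0 <;> simp [Matrix.diagonal_apply, Matrix.one_apply, hf, h]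
    rw [hone, Matrix.mul_one]
  rw [hzero, add_zero] at hsum
  exact hsum

lemma aux_tnorm_symm (X : Matrix n n ℂ) :
    (posSemidef_self_mul_conjTranspose X).sqrt.trace
      = (posSemidef_conjTranspose_mul_self X).sqrt.trace := by
  set h1 := posSemidef_conjTranspose_mul_self X with hh1
  set h2 := posSemidef_self_mul_conjTranspose X with hh2
  set U : Matrix n n ℂ := (h1.1.eigenvectorUnitary : Matrix n n ℂ) with hU
  set lam : n → ℝ := h1.1.eigenvalues with hlam
  have hlnn : ∀ i, 0 ≤ lam i := h1.eigenvalues_nonneg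
  have hsq : ∀ i, Real.sqrt (lam i) * Real.sqrt (lam i) = lam i :=
    fun i => Real.mul_self_sqrt (hlnn i)
  have hdiag : star U * (Xᴴ * X) * U = diagonal (fun i => (lam i : ℂ)) := by
    have h := h1.1.conjStarAlgAut_star_eigenvectorUnitary
    simp only [Unitary.conjStarAlgAut_apply, Unitary.coe_star, star_star] at h
    exact h
  have hUU : U * star U = 1 := Matrix.mem_unitaryGroup_iff.mp h1.1.eigenvectorUnitary.2
  set G : Matrix n n ℂ := X * U with hG
  have hGG : Gᴴ * G = diagonal (fun i => (lam i : ℂ)) := by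
    rw [hG, conjTranspose_mul, ← hdiag]
    simp only [Matrix.mul_assoc, star_eq_conjTranspose]
  set c : n → ℂ := fun i => if lam i = 0 then (0:ℂ) else ((Real.sqrt (lam i))⁻¹ : ℝ) with hc
  have hcnn : ∀ i, 0 ≤ c i := by
    intro i
    by_cases h : lam i = 0
    · simp [hc, h]
    · simp only [hc, if_neg h]
      exact Complex.zero_le_real.mpr (by positivity)
  set S : Matrix n n ℂ := G * diagonal c * Gᴴ with hS
  have hSpsd : S.PosSemidef := (Matrix.posSemidef_diagonal_iff.mpr hcnn).mul_mul_conjTranspose_same G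
  have hclc : ∀ i, c i * (lam i : ℂ) * c i = (if lam i = 0 then (0:ℂ) else 1) := by
    intro i
    by_cases h : lam i = 0
    · simp [hc, h]
    · simp only [hc, if_neg h]
      rw [← Complex.ofReal_mul, ← Complex.ofReal_mul, ← Complex.ofReal_one]
      congr 1
      have hne : Real.sqrt (lam i) ≠ 0 :=
        Real.sqrt_ne_zero'.mpr (lt_of_le_of_ne (hlnn i) (Ne.symm h))
      set s := Real.sqrt (lam i) with hs
      rw [← hsq i]
      field_simp
      rw [hs]
  have hSsq : S ^ 2 = X * Xᴴ := by
    rw [pow_two, hS]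
    calc G * diagonal c * Gᴴ * (G * diagonal c * Gᴴ)
        = G * (diagonal c * ((Gᴴ * G) * diagonal c)) * Gᴴ := by noncomm_ring
      _ = G * diagonal (fun i => if lam i = 0 then (0:ℂ) else 1) * Gᴴ := by
          rw [hGG, diagonal_mul_diagonal, diagonal_mul_diagonal]
          have hfun : (fun i => c i * ((lam i : ℂ) * c i))
              = (fun i => if lam i = 0 then (0:ℂ) else 1) := by
            funext i
            rw [← hclc i]; ring
          rw [hfun]
      _ = G * Gᴴ := by rw [aux_support_cols G lam hGG]
      _ = X * Xᴴ := by rw [hG, conjTranspose_mul, Matrix.mul_assoc, ← Matrix.mul_assoc U,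
            ← star_eq_conjTranspose, hUU, Matrix.one_mul]
  have hSeq : S = h2.sqrt := hSpsd.eq_sqrt_of_sq_eq h2 hSsq
  have hlc : ∀ i, (lam i : ℂ) * c i = (Real.sqrt (lam i) : ℂ) := by
    intro i
    by_cases h : lam i = 0
    · simp [hc, h]
    · simp only [hc, if_neg h]
      rw [← Complex.ofReal_mul]
      congr 1
      have hne : Real.sqrt (lam i) ≠ 0 :=
        Real.sqrt_ne_zero'.mpr (lt_of_le_of_ne (hlnn i) (Ne.symm h))
      set s := Real.sqrt (lam i) with hs
      rw [← hsq i]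
      field_simp
      rw [hs]
  have hStr : S.trace = ↑(∑ i, Real.sqrt (lam i)) := by
    rw [hS, Matrix.trace_mul_cycle, hGG, diagonal_mul_diagonal, trace_diagonal]
    rw [Finset.sum_congr rfl fun i _ => hlc i]
    push_cast; ring
  rw [← hSeq, hStr, aux_trace_sqrt h1]


lemma aux_tnorm_mul_le (Y Z : Matrix n n ℂ) :
    ((posSemidef_conjTranspose_mul_self (Y * Z)).sqrt.trace).re
      ≤ Real.sqrt ((Yᴴ * Y).trace.re) * Real.sqrt ((Zᴴ * Z).trace.re) := by
  set X := Y * Z with hX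
  set h1 := posSemidef_conjTranspose_mul_self X with hh1
  set U : Matrix n n ℂ := (h1.1.eigenvectorUnitary : Matrix n n ℂ) with hU
  set lam : n → ℝ := h1.1.eigenvalues with hlam
  have hlnn : ∀ i, 0 ≤ lam i := h1.eigenvalues_nonneg
  have hsq : ∀ i, Real.sqrt (lam i) * Real.sqrt (lam i) = lam i :=
    fun i => Real.mul_self_sqrt (hlnn i)
  have hdiag : star U * (Xᴴ * X) * U = diagonal (fun i => (lam i : ℂ)) := by
    have h := h1.1.conjStarAlgAut_star_eigenvectorUnitary
    simp only [Unitary.conjStarAlgAut_apply, Unitary.coe_star, star_star] at h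
    exact h
  have hUU : U * Uᴴ = 1 := by
    rw [← star_eq_conjTranspose]
    exact Matrix.mem_unitaryGroup_iff.mp h1.1.eigenvectorUnitary.2
  set G : Matrix n n ℂ := X * U with hG
  have hGG : Gᴴ * G = diagonal (fun i => (lam i : ℂ)) := by
    rw [hG, conjTranspose_mul, ← hdiag]
    simp only [Matrix.mul_assoc, star_eq_conjTranspose]
  set c : n → ℂ := fun i => if lam i = 0 then (0:ℂ) else ((Real.sqrt (lam i))⁻¹ : ℝ) with hc
  have hstarc : ∀ i, star (c i) = c i := by
    intro i
    by_cases h : lam i = 0 <;> simp [hc, h, Complex.conj_ofReal]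
  set W : Matrix n n ℂ := G * diagonal c with hW
  have hscc : star c = c := funext hstarc
  have hWconj : Wᴴ = diagonal c * Gᴴ := by
    rw [hW, conjTranspose_mul, diagonal_conjTranspose, hscc]
  have hlc : ∀ i, c i * (lam i : ℂ) = (Real.sqrt (lam i) : ℂ) := by
    intro i
    by_cases h : lam i = 0
    · simp [hc, h]
    · simp only [hc, if_neg h]
      rw [← Complex.ofReal_mul]
      congr 1
      have hne : Real.sqrt (lam i) ≠ 0 :=
        Real.sqrt_ne_zero'.mpr (lt_of_le_of_ne (hlnn i) (Ne.symm h))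
      set s := Real.sqrt (lam i) with hs
      rw [← hsq i]
      field_simp
      rw [hs]
  have k1 : (Wᴴ * G).trace = ↑(∑ i, Real.sqrt (lam i)) := by
    rw [hWconj, Matrix.mul_assoc, hGG, diagonal_mul_diagonal, trace_diagonal]
    rw [Finset.sum_congr rfl fun i _ => hlc i]
    push_cast; ring
  -- rearrange : Wᴴ * G = (Yᴴ * W)ᴴ * (Z * U)
  have k2 : Wᴴ * G = (Yᴴ * W)ᴴ * (Z * U) := by
    rw [conjTranspose_mul Yᴴ W, conjTranspose_conjTranspose, hG, hX]
    noncomm_ring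
  -- the projector
  set e : n → ℂ := fun i => if lam i = 0 then (0:ℂ) else 1 with he
  have hWW : Wᴴ * W = diagonal e := by
    rw [hWconj, hW, Matrix.mul_assoc, ← Matrix.mul_assoc Gᴴ G, hGG,
      diagonal_mul_diagonal, diagonal_mul_diagonal]
    refine congrArg diagonal (funext fun i => ?_)
    by_cases h : lam i = 0
    · simp [hc, he, h]
    · simp only [hc, he, if_neg h]
      have hne : Real.sqrt (lam i) ≠ 0 :=
        Real.sqrt_ne_zero'.mpr (lt_of_le_of_ne (hlnn i) (Ne.symm h))
      norm_cast
      set s := Real.sqrt (lam i) with hs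
      rw [← hsq i]
      field_simp
      rw [hs]
  have hWe : W * diagonal e = W := by
    rw [hW, Matrix.mul_assoc, diagonal_mul_diagonal]
    refine congrArg (G * ·) (congrArg diagonal (funext fun i => ?_))
    by_cases h : lam i = 0 <;> simp [hc, he, h]
  have hPherm : (W * Wᴴ)ᴴ = W * Wᴴ := by
    rw [conjTranspose_mul, conjTranspose_conjTranspose]
  have hPidem : (W * Wᴴ) * (W * Wᴴ) = W * Wᴴ := by
    calc (W * Wᴴ) * (W * Wᴴ) = W * (Wᴴ * W) * Wᴴ := by noncomm_ring
      _ = W * diagonal e * Wᴴ := by rw [hWW]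
      _ = W * Wᴴ := by rw [hWe]
  -- bound frob (Yᴴ * W) ≤ frob Y
  have k5 : ((Yᴴ * W)ᴴ * (Yᴴ * W)).trace.re ≤ (Yᴴ * Y).trace.re := by
    have hident : (Yᴴ * W)ᴴ * (Yᴴ * W) = Wᴴ * (Y * Yᴴ) * W := by
      rw [conjTranspose_mul, conjTranspose_conjTranspose]; noncomm_ring
    have htr : ((Yᴴ * W)ᴴ * (Yᴴ * W)).trace = ((Y * Yᴴ) * (W * Wᴴ)).trace := by
      rw [hident, Matrix.trace_mul_cycle, Matrix.trace_mul_comm]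
    rw [htr]
    have := aux_trace_mul_proj_le (posSemidef_self_mul_conjTranspose Y) hPherm hPidem
    refine this.trans (le_of_eq ?_)
    rw [Matrix.trace_mul_comm]
  have k4 : ((Z * U)ᴴ * (Z * U)).trace = (Zᴴ * Z).trace := by
    rw [Matrix.trace_mul_comm, conjTranspose_mul, Matrix.mul_assoc,
      ← Matrix.mul_assoc U Uᴴ Zᴴ, hUU, Matrix.one_mul, Matrix.trace_mul_comm]
  -- put it together
  have hmain : ((Wᴴ * G).trace).re ≤ Real.sqrt ((Yᴴ * Y).trace.re) * Real.sqrt ((Zᴴ * Z).trace.re) := by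
    rw [k2]
    refine (aux_trace_CS (Yᴴ * W) (Z * U)).trans ?_
    have h5 : Real.sqrt (((Yᴴ * W)ᴴ * (Yᴴ * W)).trace.re) ≤ Real.sqrt ((Yᴴ * Y).trace.re) :=
      Real.sqrt_le_sqrt k5
    have h4 : Real.sqrt (((Z * U)ᴴ * (Z * U)).trace.re) = Real.sqrt ((Zᴴ * Z).trace.re) := by
      rw [k4]
    rw [h4]
    exact mul_le_mul_of_nonneg_right h5 (Real.sqrt_nonneg _)
  rw [aux_trace_sqrt h1]
  rw [k1] at hmain
  rw [Complex.ofReal_re] at hmain ⊢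
  exact hmain

end AuxLemmas

lemma mfid_eq_of_psd {d : ℕ} {ρ σ : Matrix (Fin d) (Fin d) ℂ} (hρ : ρ.PosSemidef)
    (hσ : σ.PosSemidef) :
    mfid ρ σ = (((hσ.mul_mul_conjTranspose_same hρ.sqrt).sqrt).trace).re := by
  unfold mfid
  rw [dif_pos ⟨hρ, hσ⟩]

set_option maxHeartbeats 1000000 in
/-- Pinching bound for the fidelity: if `H = ⊕ᵢ Hᵢ` with orthogonal projections `Pr i` and
`σ = ∑ᵢ σᵢ` with `supp σᵢ ⊆ Hᵢ`, then `F(∑ᵢ Pr i ρ Pr i, σ) ≤ √|I| · F(ρ, σ)`. -/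
theorem pinching_fidelity_bound {d : ℕ} {I : Type*} [Fintype I]
    (Pr : I → Matrix (Fin d) (Fin d) ℂ)
    (hherm : ∀ i, (Pr i)ᴴ = Pr i) (hidem : ∀ i, Pr i * Pr i = Pr i)
    (horth : ∀ i j, i ≠ j → Pr i * Pr j = 0) (hcompl : ∑ i, Pr i = 1)
    (ρ σ : Matrix (Fin d) (Fin d) ℂ) (hρ : ρ.PosSemidef) (hσ : σ.PosSemidef)
    (σi : I → Matrix (Fin d) (Fin d) ℂ) (hσi : ∀ i, (σi i).PosSemidef)
    (hsum : σ = ∑ i, σi i) (hsupp : ∀ i, Pr i * σi i * Pr i = σi i) :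
    mfid (∑ i, Pr i * ρ * Pr i) σ ≤ Real.sqrt (Fintype.card I) * mfid ρ σ := by
  classical
  -- support facts for the σi
  have hPσ : ∀ i, Pr i * σi i = σi i := by
    intro i
    calc Pr i * σi i = Pr i * (Pr i * σi i * Pr i) := by rw [hsupp i]
      _ = (Pr i * Pr i) * σi i * Pr i := by noncomm_ring
      _ = Pr i * σi i * Pr i := by rw [hidem i]
      _ = σi i := hsupp i
  have hσP : ∀ i, σi i * Pr i = σi i := by
    intro i
    calc σi i * Pr i = (Pr i * σi i * Pr i) * Pr i := by rw [hsupp i]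
      _ = Pr i * σi i * (Pr i * Pr i) := by noncomm_ring
      _ = Pr i * σi i * Pr i := by rw [hidem i]
      _ = σi i := hsupp i
  -- sqrt of σi facts
  have hsPr : ∀ i, (hσi i).sqrt * Pr i = (hσi i).sqrt := by
    intro i
    have h0 : σi i * (1 - Pr i) = 0 := by
      rw [Matrix.mul_sub, Matrix.mul_one, hσP i, sub_self]
    have h1 := aux_sqrt_mul_eq_zero (hσi i) h0
    rw [Matrix.mul_sub, Matrix.mul_one] at h1
    exact (sub_eq_zero.mp h1).symm
  have hPrs : ∀ i, Pr i * (hσi i).sqrt = (hσi i).sqrt := by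
    intro i
    have := congrArg conjTranspose (hsPr i)
    rwa [conjTranspose_mul, hherm i, (hσi i).posSemidef_sqrt.1.eq] at this
  have hsorth : ∀ i j, i ≠ j → (hσi i).sqrt * (hσi j).sqrt = 0 := by
    intro i j hij
    refine aux_sqrt_orth (hσi i) (hσi j) ?_
    calc σi i * σi j = (σi i * Pr i) * (Pr j * σi j) := by rw [hσP i, hPσ j]
      _ = σi i * (Pr i * Pr j) * σi j := by noncomm_ring
      _ = 0 := by rw [horth i j hij, Matrix.mul_zero, Matrix.zero_mul]
  -- sqrt σ = ∑ sqrt σi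
  have hseq : (∑ i, (hσi i).sqrt) ^ 2 = σ := by
    rw [pow_two, Finset.sum_mul_sum, hsum]
    refine Finset.sum_congr rfl fun i _ => ?_
    rw [Finset.sum_eq_single_of_mem i (Finset.mem_univ i)]
    · exact (hσi i).sqrt_mul_self
    · exact fun j _ hji => hsorth i j (Ne.symm hji)
  have hssum : (∑ i, (hσi i).sqrt) = hσ.sqrt :=
    (aux_psd_sum _ fun i => (hσi i).posSemidef_sqrt).eq_sqrt_of_sq_eq hσ hseq
  have hsqPr : ∀ j, hσ.sqrt * Pr j = (hσi j).sqrt := by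
    intro j
    rw [← hssum, Finset.sum_mul]
    rw [Finset.sum_eq_single_of_mem j (Finset.mem_univ j)]
    · exact hsPr j
    · intro i _ hij
      rw [← hsPr i, Matrix.mul_assoc, horth i j hij, Matrix.mul_zero]
  have hPrsq : ∀ j, Pr j * hσ.sqrt = (hσi j).sqrt := by
    intro j
    have := congrArg conjTranspose (hsqPr j)
    rwa [conjTranspose_mul, hherm j, hσ.posSemidef_sqrt.1.eq,
      (hσi j).posSemidef_sqrt.1.eq] at this
  -- the pinched matrix
  set PA : Matrix (Fin d) (Fin d) ℂ := ∑ i, Pr i * ρ * Pr i with hPA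
  have hA : PA.PosSemidef := by
    refine aux_psd_sum _ fun i => ?_
    have := hρ.mul_mul_conjTranspose_same (Pr i)
    rwa [hherm i] at this
  -- the blocks N i
  set N : I → Matrix (Fin d) (Fin d) ℂ := fun i => (hσi i).sqrt * ρ * (hσi i).sqrt with hNdef
  have hNpsd : ∀ i, (N i).PosSemidef := by
    intro i
    have := hρ.mul_mul_conjTranspose_same (hσi i).sqrt
    rwa [(hσi i).posSemidef_sqrt.1.eq] at this
  have hNorth : ∀ i j, i ≠ j → N i * N j = 0 := by
    intro i j hij
    calc N i * N j = (hσi i).sqrt * ρ * ((hσi i).sqrt * (hσi j).sqrt) * ρ * (hσi j).sqrt := by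
          rw [hNdef]; noncomm_ring
      _ = 0 := by rw [hsorth i j hij, Matrix.mul_zero, Matrix.zero_mul, Matrix.zero_mul]
  -- lhs = ∑ x i
  set X : Matrix (Fin d) (Fin d) ℂ := hA.sqrt * hσ.sqrt with hX
  have e1 : hA.sqrt * σ * hA.sqrtᴴ = X * Xᴴ := by
    rw [hX, conjTranspose_mul, hσ.posSemidef_sqrt.1.eq, hA.posSemidef_sqrt.1.eq]
    have h' : hA.sqrt * hσ.sqrt * (hσ.sqrt * hA.sqrt)
        = hA.sqrt * (hσ.sqrt * hσ.sqrt) * hA.sqrt := by noncomm_ring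
    rw [h', hσ.sqrt_mul_self]
  have e2 : Xᴴ * X = ∑ i, N i := by
    rw [hX, conjTranspose_mul, hσ.posSemidef_sqrt.1.eq, hA.posSemidef_sqrt.1.eq]
    calc hσ.sqrt * hA.sqrt * (hA.sqrt * hσ.sqrt)
        = hσ.sqrt * (hA.sqrt * hA.sqrt) * hσ.sqrt := by noncomm_ring
      _ = hσ.sqrt * PA * hσ.sqrt := by rw [hA.sqrt_mul_self]
      _ = ∑ i, hσ.sqrt * (Pr i * ρ * Pr i) * hσ.sqrt := by
          rw [hPA, Finset.mul_sum, Finset.sum_mul]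
      _ = ∑ i, N i := by
          refine Finset.sum_congr rfl fun i _ => ?_
          calc hσ.sqrt * (Pr i * ρ * Pr i) * hσ.sqrt
              = (hσ.sqrt * Pr i) * ρ * (Pr i * hσ.sqrt) := by noncomm_ring
            _ = N i := by rw [hsqPr i, hPrsq i]
  have hSum : (∑ i, N i).PosSemidef := aux_psd_sum N hNpsd
  have lhs_eq : mfid PA σ = ∑ i, (((hNpsd i).sqrt).trace).re := by
    rw [mfid_eq_of_psd hA hσ]
    have s1 : ((hσ.mul_mul_conjTranspose_same hA.sqrt).sqrt)
        = (posSemidef_self_mul_conjTranspose X).sqrt := aux_sqrt_congr e1 _ _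
    rw [s1, aux_tnorm_symm X]
    have s2 : (posSemidef_conjTranspose_mul_self X).sqrt = hSum.sqrt := aux_sqrt_congr e2 _ _
    rw [s2, aux_sqrt_sum N hNpsd hNorth hSum, trace_sum, Complex.re_sum]
  -- M and its square roots
  set M : Matrix (Fin d) (Fin d) ℂ := hσ.sqrt * ρ * hσ.sqrt with hM
  have hMpsd : M.PosSemidef := by
    have := hρ.mul_mul_conjTranspose_same hσ.sqrt
    rwa [hσ.posSemidef_sqrt.1.eq] at this
  set Q : Matrix (Fin d) (Fin d) ℂ := hMpsd.posSemidef_sqrt.sqrt with hQ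
  have hQQ : Q * Q = hMpsd.sqrt := hMpsd.posSemidef_sqrt.sqrt_mul_self
  have hQherm : Qᴴ = Q := hMpsd.posSemidef_sqrt.posSemidef_sqrt.1.eq
  set s : ℝ := (hMpsd.sqrt.trace).re with hs
  set t : I → ℝ := fun i => ((hMpsd.sqrt * Pr i).trace).re with ht
  have hs_nonneg : 0 ≤ s := aux_trace_re_nonneg hMpsd.posSemidef_sqrt
  have htPr : ∀ i, Pr i * hMpsd.sqrt * Pr i = (Q * Pr i)ᴴ * (Q * Pr i) := by
    intro i
    rw [conjTranspose_mul, hQherm, hherm i]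
    calc Pr i * hMpsd.sqrt * Pr i = Pr i * (Q * Q) * Pr i := by rw [hQQ]
      _ = Pr i * Q * (Q * Pr i) := by noncomm_ring
  have ht_nonneg : ∀ i, 0 ≤ t i := by
    intro i
    have heq : (hMpsd.sqrt * Pr i).trace = ((Q * Pr i)ᴴ * (Q * Pr i)).trace := by
      rw [← htPr i, Matrix.trace_mul_cycle, hidem i, Matrix.trace_mul_comm]
    rw [ht]
    simp only
    rw [heq]
    exact aux_trace_re_nonneg (posSemidef_conjTranspose_mul_self _)
  -- bound each x i
  have e3 : ∀ i, N i = (Q * (Q * Pr i))ᴴ * (Q * (Q * Pr i)) := by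
    intro i
    have expand : (Q * (Q * Pr i))ᴴ * (Q * (Q * Pr i)) = Pr i * ((Q * Q) * (Q * Q)) * Pr i := by
      rw [conjTranspose_mul, conjTranspose_mul, hQherm, hherm i]
      noncomm_ring
    rw [expand, hQQ, hMpsd.sqrt_mul_self, hM]
    show (hσi i).sqrt * ρ * (hσi i).sqrt = _
    calc (hσi i).sqrt * ρ * (hσi i).sqrt
        = (Pr i * hσ.sqrt) * ρ * (hσ.sqrt * Pr i) := by rw [hPrsq i, hsqPr i]
      _ = Pr i * (hσ.sqrt * ρ * hσ.sqrt) * Pr i := by noncomm_ring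
  have hxle : ∀ i, (((hNpsd i).sqrt).trace).re ≤ Real.sqrt s * Real.sqrt (t i) := by
    intro i
    have s3 : (hNpsd i).sqrt = (posSemidef_conjTranspose_mul_self (Q * (Q * Pr i))).sqrt :=
      aux_sqrt_congr (e3 i) _ _
    rw [s3]
    refine (aux_tnorm_mul_le Q (Q * Pr i)).trans ?_
    have hq1 : (Qᴴ * Q).trace.re = s := by rw [hQherm, hQQ, hs]
    have hq2 : ((Q * Pr i)ᴴ * (Q * Pr i)).trace.re = t i := by
      rw [← htPr i, Matrix.trace_mul_cycle, hidem i, Matrix.trace_mul_comm, ht]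
    rw [hq1, hq2]
  -- ∑ t = s
  have hts : ∑ i, t i = s := by
    rw [ht, hs, ← Complex.re_sum, ← trace_sum]
    congr 2
    rw [← Finset.mul_sum, hcompl, Matrix.mul_one]
  -- rhs: mfid ρ σ = s
  set C : Matrix (Fin d) (Fin d) ℂ := hρ.sqrt * hσ.sqrt with hC
  have e4 : hρ.sqrt * σ * hρ.sqrtᴴ = C * Cᴴ := by
    rw [hC, conjTranspose_mul, hσ.posSemidef_sqrt.1.eq, hρ.posSemidef_sqrt.1.eq]
    have h' : hρ.sqrt * hσ.sqrt * (hσ.sqrt * hρ.sqrt)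
        = hρ.sqrt * (hσ.sqrt * hσ.sqrt) * hρ.sqrt := by noncomm_ring
    rw [h', hσ.sqrt_mul_self]
  have e5 : Cᴴ * C = M := by
    rw [hC, conjTranspose_mul, hσ.posSemidef_sqrt.1.eq, hρ.posSemidef_sqrt.1.eq, hM]
    calc hσ.sqrt * hρ.sqrt * (hρ.sqrt * hσ.sqrt)
        = hσ.sqrt * (hρ.sqrt * hρ.sqrt) * hσ.sqrt := by noncomm_ring
      _ = hσ.sqrt * ρ * hσ.sqrt := by rw [hρ.sqrt_mul_self]
  have s4 : ((hσ.mul_mul_conjTranspose_same hρ.sqrt).sqrt)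
      = (posSemidef_self_mul_conjTranspose C).sqrt := aux_sqrt_congr e4 _ _
  have s5 : (posSemidef_conjTranspose_mul_self C).sqrt = hMpsd.sqrt := aux_sqrt_congr e5 _ _
  have rhs_eq : mfid ρ σ = s :=
    calc mfid ρ σ
        = (((hσ.mul_mul_conjTranspose_same hρ.sqrt).sqrt).trace).re := mfid_eq_of_psd hρ hσ
      _ = (((posSemidef_self_mul_conjTranspose C).sqrt).trace).re := by rw [s4]
      _ = (((posSemidef_conjTranspose_mul_self C).sqrt).trace).re := by rw [aux_tnorm_symm C]
      _ = ((hMpsd.sqrt).trace).re := by rw [s5]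
      _ = s := hs.symm
  -- final numeric estimate
  rw [lhs_eq, rhs_eq]
  have step1 : ∑ i, (((hNpsd i).sqrt).trace).re ≤ Real.sqrt s * ∑ i, Real.sqrt (t i) := by
    rw [Finset.mul_sum]
    exact Finset.sum_le_sum fun i _ => hxle i
  have step2 : (∑ i, Real.sqrt (t i)) ≤ Real.sqrt (Fintype.card I) * Real.sqrt s := by
    have hcs := Finset.sum_mul_sq_le_sq_mul_sq Finset.univ (fun _ : I => (1 : ℝ))
      (fun i => Real.sqrt (t i))
    simp only [one_mul, one_pow] at hcs
    have hsq : ∀ i, Real.sqrt (t i) ^ 2 = t i := fun i => Real.sq_sqrt (ht_nonneg i)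
    rw [Finset.sum_congr rfl fun i _ => hsq i, Finset.sum_const, Finset.card_univ,
      nsmul_eq_mul, mul_one, hts] at hcs
    have hnn : 0 ≤ ∑ i, Real.sqrt (t i) := Finset.sum_nonneg fun i _ => Real.sqrt_nonneg _
    calc (∑ i, Real.sqrt (t i)) = Real.sqrt ((∑ i, Real.sqrt (t i)) ^ 2) := by
          rw [Real.sqrt_sq hnn]
      _ ≤ Real.sqrt ((Fintype.card I : ℝ) * s) := Real.sqrt_le_sqrt hcs
      _ = Real.sqrt (Fintype.card I) * Real.sqrt s := Real.sqrt_mul (by positivity) _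
  calc ∑ i, (((hNpsd i).sqrt).trace).re
      ≤ Real.sqrt s * ∑ i, Real.sqrt (t i) := step1
    _ ≤ Real.sqrt s * (Real.sqrt (Fintype.card I) * Real.sqrt s) :=
        mul_le_mul_of_nonneg_left step2 (Real.sqrt_nonneg _)
    _ = Real.sqrt (Fintype.card I) * (Real.sqrt s * Real.sqrt s) := by ring
    _ = Real.sqrt (Fintype.card I) * s := by rw [Real.mul_self_sqrt hs_nonneg]
end

section
/- Let M_{AB} be a positive semidefinite operator on a tensor product H_A ⊗ H_B of finite-dimensional Hilbert spaces, and let M_B = Tr_A M_{AB} be its partial trace. Then M_{AB} ≤ |A| · I_A ⊗ M_B, where |A| = dim H_A. -/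
open scoped ComplexOrder

open scoped Kronecker

private lemma sum_rot {α β γ N : Type*} [Fintype α] [Fintype β] [Fintype γ]
    [AddCommMonoid N] (f : α → β → γ → N) :
    (∑ a, ∑ b, ∑ c, f a b c) = ∑ c, ∑ a, ∑ b, f a b c :=
  (Finset.sum_congr rfl fun _ _ => Finset.sum_comm).trans Finset.sum_comm

private lemma sum_if_pull {ι M : Type*} [AddCommMonoid M] (s : Finset ι) (P : Prop)
    [Decidable P] (f : ι → M) :
    (∑ i ∈ s, if P then f i else 0) = if P then (∑ i ∈ s, f i) else 0 := by
  split <;> simp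

/-- For a positive semidefinite `M_{AB}` with partial trace `M_B = Tr_A M_{AB}`, one has
`M_{AB} ≤ |A| · I_A ⊗ M_B` in the Loewner order. -/
theorem psd_le_dim_smul_id_tensor_partial_trace {da db : Type*}
    [Fintype da] [Fintype db] [DecidableEq da] [DecidableEq db]
    (M : Matrix (da × db) (da × db) ℂ) (hM : M.PosSemidef) :
    (((Fintype.card da : ℂ) •
        ((1 : Matrix da da ℂ) ⊗ₖ
          (Matrix.of fun b b' : db => ∑ a : da, M (a, b) (a, b')))) - M).PosSemidef := by
  classical
  set MB : Matrix db db ℂ := Matrix.of fun b b' : db => ∑ a : da, M (a, b) (a, b') with hMB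
  have hMBh : MB.IsHermitian := by
    ext b b'
    simp only [Matrix.conjTranspose_apply, hMB, Matrix.of_apply, star_sum]
    exact Finset.sum_congr rfl fun a _ => hM.1.apply _ _
  refine Matrix.PosSemidef.of_dotProduct_mulVec_nonneg ?_ ?_
  · refine Matrix.IsHermitian.sub ?_ hM.1
    ext ⟨a, b⟩ ⟨a', b'⟩
    by_cases h : a = a'
    · subst h
      simp only [Matrix.conjTranspose_apply, Matrix.smul_apply, Matrix.kroneckerMap_apply,
        Matrix.one_apply_eq, one_mul, smul_eq_mul, star_mul', star_natCast]
      rw [hMBh.apply b b', mul_comm]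
    · simp [Matrix.one_apply, h, Ne.symm h]
  intro x
  set s : ((da × db) → ℂ) → ((da × db) → ℂ) → ℂ :=
    fun u v => ∑ p : da × db, ∑ q : da × db, star (u p) * M p q * v q with hsdef
  have hs : ∀ v : (da × db) → ℂ, dotProduct (star v) (M.mulVec v) = s v v := by
    intro v
    simp [hsdef, dotProduct, Matrix.mulVec, Finset.mul_sum, mul_assoc]
  have hnn : ∀ v : (da × db) → ℂ, 0 ≤ s v v := fun v => hs v ▸ hM.dotProduct_mulVec_nonneg v
  set u : da → da → (da × db) → ℂ := fun a c p => if p.1 = c then x (a, p.2) else 0 with hu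
  -- entrywise formula for s (u a c) (u a' c')
  have key1 : ∀ a c a' c' : da, s (u a c) (u a' c')
      = ∑ b : db, ∑ b' : db, star (x (a, b)) * M (c, b) (c', b') * x (a', b') := by
    intro a c a' c'
    simp only [hsdef, hu, Fintype.sum_prod_type, apply_ite, star_zero, ite_mul, mul_ite,
      zero_mul, mul_zero, sum_if_pull, Finset.sum_ite_eq', Finset.mem_univ, if_true]
  -- the quadratic form of x
  have hsxxN : s x x = ∑ c : da, ∑ b : db, ∑ d : da, ∑ b' : db,
      star (x (c, b)) * M (c, b) (d, b') * x (d, b') := by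
    simp only [hsdef, Fintype.sum_prod_type]
  have hsxx : s x x = ∑ c : da, ∑ d : da, s (u c c) (u d d) := by
    simp only [key1, hsxxN]
    exact Finset.sum_congr rfl fun c _ => Finset.sum_comm
  have hsxx' : s x x = ∑ c : da, ∑ d : da, s (u d d) (u c c) := by
    rw [hsxx]; exact Finset.sum_comm
  -- the Kronecker quadratic form
  have hkron : dotProduct (star x) ((((1 : Matrix da da ℂ) ⊗ₖ MB)).mulVec x)
      = ∑ a : da, ∑ c : da, s (u a c) (u a c) := by
    calc dotProduct (star x) ((((1 : Matrix da da ℂ) ⊗ₖ MB)).mulVec x)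
        = ∑ a : da, ∑ b : db, ∑ b' : db, ∑ c : da,
          star (x (a, b)) * M (c, b) (c, b') * x (a, b') := by
          simp only [dotProduct, Matrix.mulVec, Matrix.kroneckerMap_apply,
            Matrix.one_apply, hMB, Matrix.of_apply, Fintype.sum_prod_type, Pi.star_apply,
            ite_mul, one_mul, zero_mul, Finset.mul_sum, mul_ite, mul_zero, sum_if_pull,
            Finset.sum_ite_eq, Finset.mem_univ, if_true, Finset.sum_mul]
          refine Finset.sum_congr rfl fun a _ => Finset.sum_congr rfl fun b _ =>
            Finset.sum_congr rfl fun b' _ => Finset.sum_congr rfl fun c _ => ?_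
          ring
      _ = ∑ a : da, ∑ c : da, s (u a c) (u a c) := by
          simp only [key1]
          exact Finset.sum_congr rfl fun a _ => sum_rot _
  -- expansion of the quadratic form of a difference
  have hsub : ∀ v w : (da × db) → ℂ,
      s (v - w) (v - w) = s v v + s w w - s v w - s w v := by
    intro v w
    simp only [hsdef, Pi.sub_apply, star_sub, sub_mul, mul_sub, Finset.sum_sub_distrib]
    ring
  set T : ℂ := ∑ c : da, s (u c c) (u c c) with hT
  have hcard0 : (0 : ℂ) ≤ (Fintype.card da : ℂ) := by
    rw [Complex.le_def]; simp
  have hpair : 0 ≤ ∑ c : da, ∑ d : da, s (u c c - u d d) (u c c - u d d) :=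
    Finset.sum_nonneg fun c _ => Finset.sum_nonneg fun d _ => hnn _
  have hexp : ∑ c : da, ∑ d : da, s (u c c - u d d) (u c c - u d d)
      = ((Fintype.card da : ℂ) * T - s x x) + ((Fintype.card da : ℂ) * T - s x x) := by
    simp only [hsub, Finset.sum_add_distrib, Finset.sum_sub_distrib]
    rw [← hsxx, ← hsxx']
    simp only [Finset.sum_const, Finset.card_univ, nsmul_eq_mul]
    rw [← hT]
    rw [show (∑ c : da, (Fintype.card da : ℂ) * s (u c c) (u c c))
        = (Fintype.card da : ℂ) * T by rw [hT, Finset.mul_sum]]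
    ring
  have hkey : s x x ≤ (Fintype.card da : ℂ) * T := by
    rw [hexp] at hpair
    have h2 : (0:ℂ) ≤ 1/2 := by rw [Complex.le_def]; norm_num
    have h3 : (0:ℂ) ≤ (Fintype.card da : ℂ) * T - s x x := by
      calc (0:ℂ) ≤ 1/2 * (((Fintype.card da : ℂ) * T - s x x)
            + ((Fintype.card da : ℂ) * T - s x x)) := mul_nonneg h2 hpair
        _ = (Fintype.card da : ℂ) * T - s x x := by ring
    exact sub_nonneg.mp h3
  have hT2 : T ≤ ∑ a : da, ∑ c : da, s (u a c) (u a c) := by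
    rw [hT]
    exact Finset.sum_le_sum fun a _ =>
      Finset.single_le_sum (fun c _ => hnn _) (Finset.mem_univ a)
  have hfin : s x x ≤ (Fintype.card da : ℂ) * ∑ a : da, ∑ c : da, s (u a c) (u a c) :=
    hkey.trans (mul_le_mul_of_nonneg_left hT2 hcard0)
  have hsplit : dotProduct (star x)
        ((((Fintype.card da : ℂ) • ((1 : Matrix da da ℂ) ⊗ₖ MB)) - M).mulVec x)
      = (Fintype.card da : ℂ) *
          dotProduct (star x) ((((1 : Matrix da da ℂ) ⊗ₖ MB)).mulVec x) - s x x := by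
    rw [Matrix.sub_mulVec, dotProduct_sub, Matrix.smul_mulVec,
      dotProduct_smul, hs x, smul_eq_mul]
  rw [hsplit, hkron]
  exact sub_nonneg.mpr hfin
end
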